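/- If X ∈ H_n satisfies X ⊥ range Γ (in the trace inner product), then for any Λ in the open set L₊ = {Λ ∈ H_n : G(z)*ΛG(z) > 0 for all z ∈ 𝕋}, the function G*(Λ + X)G equals G*ΛG pointwise on 𝕋; hence the parametrization Λ ↦ G*ΛG restricted to L₊ ∩ range Γ loses no generality. -/

import Mathlib

open Real
open scoped Matrix ComplexOrder

attribute [local instance] Matrix.frobeniusSeminormedAddCommGroup
  Matrix.frobeniusNormedAddCommGroup Matrix.frobeniusNormedSpace

/-- If a Hermitian `X` is orthogonal (in the trace inner product) to the range of
`Γ(Φ) = ∫ G Φ G* dθ/(2π)`, then for every `Λ` in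
`L₊ = {Λ Hermitian : G(z)*ΛG(z) > 0 on 𝕋}` the function `G*(Λ+X)G` coincides with `G*ΛG`
pointwise on the circle; hence the parametrization `Λ ↦ G*ΛG` restricted to `L₊ ∩ range Γ`
loses no generality. -/
theorem stmt_7 (n m : ℕ) (G : C(Circle, Matrix (Fin n) (Fin m) ℂ))
    (X : Matrix (Fin n) (Fin n) ℂ) (hX : X.IsHermitian)
    (horth : ∀ Φ : C(Circle, Matrix (Fin m) (Fin m) ℂ), (∀ z, (Φ z).IsHermitian) →
      ((((2 * π)⁻¹ •
          ∫ θ in (-π)..π,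
            G (Circle.exp θ) * Φ (Circle.exp θ) * (G (Circle.exp θ))ᴴ) : Matrix (Fin n) (Fin n) ℂ)
        * Xᴴ).trace = 0)
    (Λ : Matrix (Fin n) (Fin n) ℂ) (hΛ : Λ.IsHermitian)
    (hpos : ∀ z : Circle, ((G z)ᴴ * Λ * G z).PosDef) :
    ∀ z : Circle, (G z)ᴴ * (Λ + X) * G z = (G z)ᴴ * Λ * G z := by
  classical
  -- the candidate "multiplier" Φ(z) = G(z)ᴴ X G(z)
  have hΦc : Continuous fun z : Circle => (G z)ᴴ * X * G z :=
    (G.continuous.matrix_conjTranspose.matrix_mul continuous_const).matrix_mul G.continuous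
  set Φ : C(Circle, Matrix (Fin m) (Fin m) ℂ) := ⟨fun z => (G z)ᴴ * X * G z, hΦc⟩ with hΦdef
  have hΦherm : ∀ z, (Φ z).IsHermitian := by
    intro z
    simp only [hΦdef, ContinuousMap.coe_mk, Matrix.IsHermitian, Matrix.conjTranspose_mul,
      Matrix.conjTranspose_conjTranspose, hX.eq, Matrix.mul_assoc]
  -- the real-valued function g
  set g : ℝ → ℝ := fun θ =>
    ∑ i, ∑ j, Complex.normSq (((G (Circle.exp θ))ᴴ * X * G (Circle.exp θ)) i j) with hgdef
  have hNc : Continuous fun θ : ℝ => (G (Circle.exp θ))ᴴ * X * G (Circle.exp θ) :=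
    hΦc.comp Circle.exp.continuous
  have hgc : Continuous g := by
    apply continuous_finset_sum
    intro i _
    apply continuous_finset_sum
    intro j _
    exact Complex.continuous_normSq.comp ((hNc.matrix_elem i j))
  have hgnn : ∀ θ, 0 ≤ g θ := by
    intro θ
    apply Finset.sum_nonneg
    intro i _
    exact Finset.sum_nonneg fun j _ => Complex.normSq_nonneg _
  -- pointwise trace identity
  have hptwise : ∀ z : Circle,
      (G z * Φ z * (G z)ᴴ * Xᴴ).trace
        = ((∑ i, ∑ j, Complex.normSq (((G z)ᴴ * X * G z) i j) : ℝ) : ℂ) := by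
    intro z
    set N : Matrix (Fin m) (Fin m) ℂ := (G z)ᴴ * X * G z with hNdef
    have hNh : N.IsHermitian := hΦherm z
    have h1 : (G z * Φ z * (G z)ᴴ * Xᴴ).trace = (N * N).trace := by
      rw [hX.eq]
      calc (G z * Φ z * (G z)ᴴ * X).trace
          = (X * (G z * Φ z * (G z)ᴴ)).trace := Matrix.trace_mul_comm _ _
        _ = ((X * G z * Φ z) * (G z)ᴴ).trace := by simp only [Matrix.mul_assoc]
        _ = ((G z)ᴴ * (X * G z * Φ z)).trace := Matrix.trace_mul_comm _ _
        _ = (N * N).trace := by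
            simp only [hΦdef, ContinuousMap.coe_mk, hNdef, Matrix.mul_assoc]
    rw [h1]
    have h2 : (N * N).trace = ∑ i, ∑ j, N i j * N j i := by
      simp [Matrix.trace, Matrix.mul_apply, Matrix.diag]
    rw [h2]
    push_cast
    refine Finset.sum_congr rfl fun i _ => Finset.sum_congr rfl fun j _ => ?_
    have hji : N j i = (starRingEnd ℂ) (N i j) := by
      conv_lhs => rw [← hNh.eq]
      simp [Matrix.conjTranspose_apply]
    rw [hji, Complex.mul_conj]
  -- the trace linear functional  A ↦ tr (A Xᴴ)
  set L : Matrix (Fin n) (Fin n) ℂ →L[ℂ] ℂ :=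
    LinearMap.toContinuousLinearMap
      { toFun := fun A => (A * Xᴴ).trace
        map_add' := fun A B => by simp [Matrix.add_mul]
        map_smul' := fun c A => by simp [Matrix.smul_mul] } with hLdef
  have hFc : Continuous fun θ : ℝ =>
      G (Circle.exp θ) * Φ (Circle.exp θ) * (G (Circle.exp θ))ᴴ := by
    have hGc : Continuous fun θ : ℝ => G (Circle.exp θ) := G.continuous.comp Circle.exp.continuous
    exact (hGc.matrix_mul (hΦc.comp Circle.exp.continuous)).matrix_mul hGc.matrix_conjTranspose
  letI : ENormedAddMonoid (Matrix (Fin n) (Fin n) ℂ) :=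
    (Matrix.frobeniusNormedAddCommGroup).toENormedAddCommMonoid.toENormedAddMonoid
  have hFint : IntervalIntegrable
      (fun θ : ℝ => G (Circle.exp θ) * Φ (Circle.exp θ) * (G (Circle.exp θ))ᴴ)
      MeasureTheory.volume (-π) π := hFc.intervalIntegrable _ _
  -- the integral of g vanishes
  have hint : (∫ θ in (-π)..π, g θ) = 0 := by
    have h := horth Φ hΦherm
    rw [Matrix.smul_mul, Matrix.trace_smul] at h
    have h3 : ((∫ θ in (-π)..π,
        G (Circle.exp θ) * Φ (Circle.exp θ) * (G (Circle.exp θ))ᴴ) * Xᴴ).trace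
        = ((∫ θ in (-π)..π, g θ : ℝ) : ℂ) := by
      have h4 : ((∫ θ in (-π)..π,
          G (Circle.exp θ) * Φ (Circle.exp θ) * (G (Circle.exp θ))ᴴ) * Xᴴ).trace
          = L (∫ θ in (-π)..π,
              G (Circle.exp θ) * Φ (Circle.exp θ) * (G (Circle.exp θ))ᴴ) := rfl
      rw [h4]
      refine (L.intervalIntegral_comp_comm hFint).symm.trans ?_
      have h5 : ∀ θ : ℝ, L (G (Circle.exp θ) * Φ (Circle.exp θ) * (G (Circle.exp θ))ᴴ)
          = ((g θ : ℝ) : ℂ) := fun θ => hptwise (Circle.exp θ)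
      refine (intervalIntegral.integral_congr (fun θ _ => h5 θ)).trans ?_
      exact intervalIntegral.integral_ofReal
    rw [h3] at h
    have h6 : ((2 * π)⁻¹ : ℝ) ≠ 0 := by positivity
    have h7 : (((2 * π)⁻¹ * ∫ θ in (-π)..π, g θ : ℝ) : ℂ) = 0 := by
      rw [Complex.ofReal_mul]; rw [Complex.real_smul] at h; exact_mod_cast h
    have := Complex.ofReal_eq_zero.mp h7
    exact (mul_eq_zero.mp this).resolve_left h6
  -- g vanishes on (-π, π]
  have hg0 : ∀ θ ∈ Set.Ioc (-π) π, g θ = 0 := by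
    have hgint : IntervalIntegrable g MeasureTheory.volume (-π) π := hgc.intervalIntegrable _ _
    have hae := (intervalIntegral.integral_eq_zero_iff_of_nonneg_ae
      (Filter.Eventually.of_forall fun θ => hgnn θ) hgint).mp hint
    have hIoc : Set.Ioc π (-π) = (∅ : Set ℝ) := Set.Ioc_eq_empty (by
      intro hc; linarith [pi_pos])
    rw [hIoc, Set.union_empty] at hae
    have hnull : MeasureTheory.volume.restrict (Set.Ioc (-π) π) {x | g x ≠ 0} = 0 := by
      rw [Filter.EventuallyEq, MeasureTheory.ae_iff] at hae
      simp only [Pi.zero_apply] at hae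
      exact hae
    intro θ₀ hθ₀
    by_contra hne
    have hpos' : 0 < g θ₀ := lt_of_le_of_ne (hgnn θ₀) (Ne.symm hne)
    have hopen : IsOpen {x | 0 < g x} := isOpen_lt continuous_const hgc
    obtain ⟨ε, hε, hball⟩ := Metric.isOpen_iff.mp hopen θ₀ hpos'
    set a : ℝ := max (θ₀ - ε) (-π) with hadef
    have ha : a < θ₀ := max_lt (by linarith) hθ₀.1
    have hsub : Set.Ioc a θ₀ ⊆ {x | g x ≠ 0} := by
      intro x hx
      have hx1 : x ∈ Metric.ball θ₀ ε := by
        rw [Metric.mem_ball, Real.dist_eq, abs_lt]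
        constructor
        · have : θ₀ - ε ≤ a := le_max_left _ _
          linarith [hx.1]
        · linarith [hx.2, hε]
      have := hball hx1
      exact ne_of_gt this
    have hsub2 : Set.Ioc a θ₀ ⊆ Set.Ioc (-π) π :=
      Set.Ioc_subset_Ioc (le_max_right _ _) hθ₀.2
    have hmeas : MeasureTheory.volume.restrict (Set.Ioc (-π) π) (Set.Ioc a θ₀)
        = MeasureTheory.volume (Set.Ioc a θ₀) := by
      rw [MeasureTheory.Measure.restrict_apply measurableSet_Ioc,
        Set.inter_eq_left.mpr hsub2]
    have hposmeas : 0 < MeasureTheory.volume (Set.Ioc a θ₀) := by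
      rw [Real.volume_Ioc]
      exact ENNReal.ofReal_pos.mpr (by linarith)
    have hle : MeasureTheory.volume.restrict (Set.Ioc (-π) π) (Set.Ioc a θ₀)
        ≤ MeasureTheory.volume.restrict (Set.Ioc (-π) π) {x | g x ≠ 0} :=
      MeasureTheory.measure_mono hsub
    rw [hnull, hmeas] at hle
    exact absurd hle (not_le.mpr hposmeas)
  -- conclude: G(z)ᴴ X G(z) = 0 for every z
  have key : ∀ z : Circle, (G z)ᴴ * X * G z = 0 := by
    intro z
    have harg : Complex.arg (z : ℂ) ∈ Set.Ioc (-π) π := Complex.arg_mem_Ioc _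
    have hz : Circle.exp (Complex.arg (z : ℂ)) = z := Circle.exp_arg z
    have hg := hg0 _ harg
    rw [hgdef] at hg
    simp only [hz] at hg
    ext i j
    have h1 : ∀ i ∈ (Finset.univ : Finset (Fin m)),
        0 ≤ ∑ j, Complex.normSq (((G z)ᴴ * X * G z) i j) :=
      fun i _ => Finset.sum_nonneg fun j _ => Complex.normSq_nonneg _
    have h2 := (Finset.sum_eq_zero_iff_of_nonneg h1).mp hg i (Finset.mem_univ i)
    have h3 := (Finset.sum_eq_zero_iff_of_nonneg
      (fun j _ => Complex.normSq_nonneg _)).mp h2 j (Finset.mem_univ j)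
    simpa [Complex.normSq_eq_zero] using h3
  intro z
  rw [Matrix.mul_add, Matrix.add_mul, key z, add_zero]
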